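/- arXiv:math/0009182 — 2 statements merged into one kernel-verified Lean document; each statement's English description precedes it below -/
import Mathlib

section
/- Let q be a prime power and n ≥ 0. For any conjugacy class C of GL(n+1, F_q), let f denote the dimension over F_q of the fixed space ker(β − I) ⊆ F_q^{n+1} of any element β of C (this dimension is the same for all β in C). Then the number of elements of the affine group A(n,q) that lie in C equals |A(n,q)| · (q^f − 1) · |C| / |GL(n+1,q)|. -/
open Matrix

/-- Membership in the affine group `A(n,q)`: invertible `(n+1) × (n+1)` matrices with
`x_{11} = 1` and `x_{j1} = 0` for `j ≥ 2` (indices starting at `0` in Lean). -/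
def IsAff {F : Type} [Field F] {n : ℕ} (x : GL (Fin (n + 1)) F) : Prop :=
  x.val 0 0 = 1 ∧ ∀ j : Fin (n + 1), j ≠ 0 → x.val j 0 = 0


theorem key_comm {G : Type*} [Group G] {b c g : G} (h : c * b * c⁻¹ = g * b * g⁻¹) :
    (c⁻¹ * g) * b = b * (c⁻¹ * g) := by
  calc (c⁻¹ * g) * b = c⁻¹ * (g * b * g⁻¹) * g := by group
    _ = c⁻¹ * (c * b * c⁻¹) * g := by rw [h]
    _ = b * (c⁻¹ * g) := by group

theorem conj_fiber_card {G : Type*} [Group G] (b : G) (P : G → Prop) :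
    Nat.card {g : G // P (g * b * g⁻¹)} =
      Nat.card {x : G // P x ∧ IsConj b x} * Nat.card {c : G // c * b = b * c} := by
  classical
  have hs : ∀ x : {x : G // IsConj b x}, ∃ c : G, c * b * c⁻¹ = x.1 := fun x =>
    isConj_iff.mp x.2
  choose s hs using hs
  rw [← Nat.card_prod]
  apply Nat.card_congr
  have conj_eq : ∀ (x : {x : G // IsConj b x}) (c : G), c * b = b * c →
      (s x * c) * b * (s x * c)⁻¹ = x.1 := by
    intro x c hc
    calc (s x * c) * b * (s x * c)⁻¹ = s x * (c * b) * c⁻¹ * (s x)⁻¹ := by group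
      _ = s x * (b * c) * c⁻¹ * (s x)⁻¹ := by rw [hc]
      _ = s x * b * (s x)⁻¹ := by group
      _ = x.1 := hs x
  refine {
    toFun := fun g => (⟨g.1 * b * g.1⁻¹, g.2, isConj_iff.mpr ⟨g.1, rfl⟩⟩,
      ⟨(s ⟨g.1 * b * g.1⁻¹, isConj_iff.mpr ⟨g.1, rfl⟩⟩)⁻¹ * g.1,
        key_comm (hs ⟨g.1 * b * g.1⁻¹, isConj_iff.mpr ⟨g.1, rfl⟩⟩)⟩),
    invFun := fun p => ⟨s ⟨p.1.1, p.1.2.2⟩ * p.2.1, by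
      rw [conj_eq ⟨p.1.1, p.1.2.2⟩ p.2.1 p.2.2]; exact p.1.2.1⟩,
    left_inv := ?_, right_inv := ?_ }
  · rintro ⟨g, hg⟩
    apply Subtype.ext
    simp only [mul_inv_cancel_left]
  · rintro ⟨⟨x, hx⟩, ⟨c, hc⟩⟩
    have hxval : (⟨x, hx⟩ : {x : G // P x ∧ IsConj b x}).1 = x := rfl
    have hmain : (s ⟨x, hx.2⟩ * c) * b * (s ⟨x, hx.2⟩ * c)⁻¹ = x :=
      conj_eq ⟨x, hx.2⟩ c hc
    ext
    · exact hmain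
    · show (s ⟨(s ⟨x, hx.2⟩ * c) * b * (s ⟨x, hx.2⟩ * c)⁻¹,
          isConj_iff.mpr ⟨_, rfl⟩⟩)⁻¹ * (s ⟨x, hx.2⟩ * c) = c
      rw [show (⟨(s ⟨x, hx.2⟩ * c) * b * (s ⟨x, hx.2⟩ * c)⁻¹, isConj_iff.mpr ⟨_, rfl⟩⟩ :
        {x : G // IsConj b x}) = ⟨x, hx.2⟩ from Subtype.ext hmain, inv_mul_cancel_left]

variable {F : Type} [Field F] {n : ℕ}

theorem exists_gl_mulVec_eq (v : Fin (n + 1) → F) (hv : v ≠ 0) :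
    ∃ g : GL (Fin (n + 1)) F, g.val.mulVec v = Pi.single 0 1 := by
  classical
  have li : LinearIndepOn F id ({v} : Set (Fin (n + 1) → F)) :=
    (linearIndepOn_singleton_iff F).mpr hv
  let b := Module.Basis.extend li
  haveI : Fintype (li.extend (Set.subset_univ ({v} : Set (Fin (n + 1) → F)))) :=
    FiniteDimensional.fintypeBasisIndex b
  let b' := Pi.basisFun F (Fin (n + 1))
  let e0 := b.indexEquiv b'
  have hv' : v ∈ li.extend (Set.subset_univ _) := li.subset_extend _ rfl
  let e := e0.trans (Equiv.swap (e0 ⟨v, hv'⟩) 0)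
  let le := b.equiv b' e
  have hle : le v = Pi.single 0 1 := by
    have h1 : b ⟨v, hv'⟩ = v := Module.Basis.extend_apply_self li ⟨v, hv'⟩
    have h2 := b.equiv_apply (i := ⟨v, hv'⟩) b' e
    rw [h1] at h2
    refine h2.trans ?_
    simp [e, Equiv.swap_apply_left, b']
  have h1 : LinearMap.toMatrix' le.toLinearMap * LinearMap.toMatrix' le.symm.toLinearMap
      = 1 := by
    rw [← LinearMap.toMatrix'_comp, LinearEquiv.comp_coe, LinearEquiv.symm_trans_self,
      LinearEquiv.refl_toLinearMap, LinearMap.toMatrix'_id]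
  have h2 : LinearMap.toMatrix' le.symm.toLinearMap * LinearMap.toMatrix' le.toLinearMap
      = 1 := by
    rw [← LinearMap.toMatrix'_comp, LinearEquiv.comp_coe, LinearEquiv.self_trans_symm,
      LinearEquiv.refl_toLinearMap, LinearMap.toMatrix'_id]
  refine ⟨⟨LinearMap.toMatrix' le.toLinearMap, LinearMap.toMatrix' le.symm.toLinearMap,
    h1, h2⟩, ?_⟩
  show (LinearMap.toMatrix' le.toLinearMap).mulVec v = _
  rw [← Matrix.toLin'_apply, Matrix.toLin'_toMatrix']
  exact hle

theorem gl_inv_mulVec (g : GL (Fin (n + 1)) F) (w : Fin (n + 1) → F) :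
    (g⁻¹).val.mulVec (g.val.mulVec w) = w := by
  rw [Matrix.mulVec_mulVec, ← Units.val_mul, inv_mul_cancel, Units.val_one, Matrix.one_mulVec]

theorem gl_mulVec_inv (g : GL (Fin (n + 1)) F) (w : Fin (n + 1) → F) :
    g.val.mulVec ((g⁻¹).val.mulVec w) = w := by
  rw [Matrix.mulVec_mulVec, ← Units.val_mul, mul_inv_cancel, Units.val_one, Matrix.one_mulVec]

theorem gl_mulVec_eq_iff (g : GL (Fin (n + 1)) F) (w u : Fin (n + 1) → F) :
    g.val.mulVec w = u ↔ w = (g⁻¹).val.mulVec u := by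
  constructor
  · rintro rfl; rw [gl_inv_mulVec]
  · rintro rfl; rw [gl_mulVec_inv]

theorem isAff_iff (x : GL (Fin (n + 1)) F) :
    IsAff x ↔ x.val.mulVec (Pi.single 0 1) = Pi.single 0 1 := by
  rw [Matrix.mulVec_single_one, funext_iff]
  constructor
  · rintro ⟨h1, h2⟩ i
    by_cases hi : i = 0
    · subst hi; simpa using h1
    · simp only [transpose_apply, Pi.single_apply, if_neg hi]
      exact h2 i hi
  · intro h
    refine ⟨by simpa using h 0, fun j hj => ?_⟩
    have := h j
    simpa [Pi.single_apply, hj] using this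

theorem isAff_inv {x : GL (Fin (n + 1)) F} (h : IsAff x) : IsAff x⁻¹ := by
  rw [isAff_iff] at h ⊢
  conv_lhs => rw [← h]
  rw [gl_inv_mulVec]

theorem aff_fiber_card [Fintype F] (β : GL (Fin (n + 1)) F) :
    Nat.card {g : GL (Fin (n + 1)) F // IsAff (g * β * g⁻¹)} =
      Nat.card {v : Fin (n + 1) → F // β.val.mulVec v = v ∧ v ≠ 0} *
        Nat.card {x : GL (Fin (n + 1)) F // IsAff x} := by
  classical
  set e₀ : Fin (n + 1) → F := Pi.single 0 1 with he₀
  have he₀ne : e₀ ≠ 0 := by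
    intro h
    have := congrFun h 0
    simp [he₀] at this
  have hts : ∀ v : {v : Fin (n + 1) → F // β.val.mulVec v = v ∧ v ≠ 0},
      ∃ g : GL (Fin (n + 1)) F, g.val.mulVec v.1 = e₀ := fun v =>
    exists_gl_mulVec_eq v.1 v.2.2
  choose t ht using hts
  have key : ∀ g : GL (Fin (n + 1)) F, IsAff (g * β * g⁻¹) ↔
      β.val.mulVec ((g⁻¹).val.mulVec e₀) = (g⁻¹).val.mulVec e₀ := by
    intro g
    rw [isAff_iff]
    have h1 : ((g * β * g⁻¹).val).mulVec e₀
        = g.val.mulVec (β.val.mulVec ((g⁻¹).val.mulVec e₀)) := by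
      simp [Matrix.mulVec_mulVec, Matrix.mul_assoc]
    rw [h1, gl_mulVec_eq_iff]
  have hne : ∀ g : GL (Fin (n + 1)) F, (g⁻¹).val.mulVec e₀ ≠ 0 := by
    intro g h
    apply he₀ne
    rw [← gl_mulVec_inv g e₀, h, Matrix.mulVec_zero]
  -- inverse image under a·t v of e₀ is v
  have hval : ∀ (v : {v : Fin (n + 1) → F // β.val.mulVec v = v ∧ v ≠ 0})
      (a : {x : GL (Fin (n + 1)) F // IsAff x}),
      ((a.1 * t v)⁻¹).val.mulVec e₀ = v.1 := by
    intro v a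
    have ha : (a.1⁻¹).val.mulVec e₀ = e₀ := by
      rw [he₀]; exact (isAff_iff _).mp (isAff_inv a.2)
    have h3 : (((a.1 * t v)⁻¹).val).mulVec e₀
        = ((t v)⁻¹).val.mulVec ((a.1⁻¹).val.mulVec e₀) := by
      rw [_root_.mul_inv_rev]
      simp [Matrix.mulVec_mulVec]
    rw [h3, ha, ← ht v, gl_inv_mulVec]
  rw [← Nat.card_prod]
  have hmem : ∀ p : {v : Fin (n + 1) → F // β.val.mulVec v = v ∧ v ≠ 0} ×
      {x : GL (Fin (n + 1)) F // IsAff x}, IsAff (p.2.1 * t p.1 * β * (p.2.1 * t p.1)⁻¹) := by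
    intro p
    rw [key, hval p.1 p.2]
    exact p.1.2.1
  refine (Nat.card_eq_of_bijective (fun p => ⟨p.2.1 * t p.1, hmem p⟩) ⟨?_, ?_⟩).symm
  · -- injective
    rintro ⟨v, a⟩ ⟨w, b⟩ hab
    have h0 : a.1 * t v = b.1 * t w := congrArg Subtype.val hab
    have h1 : v = w := by
      apply Subtype.ext
      rw [← hval v a, ← hval w b, h0]
    subst h1
    have h2 : a = b := by
      apply Subtype.ext
      have := mul_right_cancel h0
      exact this
    rw [h2]
  · -- surjective
    rintro ⟨g, hg⟩
    refine ⟨⟨⟨(g⁻¹).val.mulVec e₀, (key g).mp hg, hne g⟩,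
      ⟨g * (t ⟨(g⁻¹).val.mulVec e₀, (key g).mp hg, hne g⟩)⁻¹, ?_⟩⟩, ?_⟩
    · rw [isAff_iff]
      set v : {v : Fin (n + 1) → F // β.val.mulVec v = v ∧ v ≠ 0} :=
        ⟨(g⁻¹).val.mulVec e₀, (key g).mp hg, hne g⟩ with hv
      have h2 : ((t v)⁻¹).val.mulVec e₀ = v.1 := by
        rw [← ht v, gl_inv_mulVec]
      have h3 : ((g * (t v)⁻¹).val).mulVec e₀
          = g.val.mulVec (((t v)⁻¹).val.mulVec e₀) := by
        rw [Units.val_mul, ← Matrix.mulVec_mulVec]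
      rw [← he₀, h3, h2]
      exact gl_mulVec_inv g e₀
    · apply Subtype.ext
      show g * (t _)⁻¹ * t _ = g
      rw [inv_mul_cancel_right]

theorem fix_card [Fintype F] (β : GL (Fin (n + 1)) F) :
    Nat.card {v : Fin (n + 1) → F // β.val.mulVec v = v ∧ v ≠ 0}
      = Fintype.card F ^ Module.finrank F (LinearMap.ker (Matrix.toLin' (β.val - 1))) - 1 := by
  classical
  set K := LinearMap.ker (Matrix.toLin' (β.val - 1)) with hK
  have hmem : ∀ v : Fin (n + 1) → F, v ∈ K ↔ β.val.mulVec v = v := by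
    intro v
    rw [hK, LinearMap.mem_ker, Matrix.toLin'_apply, Matrix.sub_mulVec, Matrix.one_mulVec,
      sub_eq_zero]
  have e : {v : Fin (n + 1) → F // β.val.mulVec v = v ∧ v ≠ 0} ≃ {x : K // x ≠ 0} :=
    { toFun := fun v => ⟨⟨v.1, (hmem v.1).mpr v.2.1⟩, by
        intro h
        exact v.2.2 (congrArg Subtype.val h)⟩,
      invFun := fun x => ⟨x.1.1, (hmem x.1.1).mp x.1.2, by
        intro h
        exact x.2 (Subtype.ext h)⟩,
      left_inv := fun v => rfl,
      right_inv := fun x => rfl }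
  rw [Nat.card_congr e]
  haveI : Fintype K := Fintype.ofFinite K
  rw [Nat.card_eq_fintype_card]
  have h1 : Fintype.card {x : K // x ≠ 0} = Fintype.card K - Fintype.card {x : K // x = 0} :=
    Fintype.card_subtype_compl _
  rw [h1, Fintype.card_subtype_eq (0 : K), Module.card_eq_pow_finrank (K := F) (V := K)]

/-- The number of elements of the affine group `A(n,q)` lying in the conjugacy class of
`β ∈ GL(n+1, F_q)` equals `|A(n,q)| ⬝ (q^f - 1) ⬝ |C| / |GL(n+1,q)|`, where `f` is the
dimension of the fixed space `ker (β - I)`.  (Stated multiplied through by `|GL(n+1,q)|`.) -/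
theorem affine_conjClass_count (F : Type) [Field F] [Fintype F] (q : ℕ)
    (hq : q = Fintype.card F) (n : ℕ) (β : GL (Fin (n + 1)) F) (f : ℕ)
    (hf : f = Module.finrank F (LinearMap.ker (Matrix.toLin' (β.val - 1)))) :
    Nat.card {x : GL (Fin (n + 1)) F // IsAff x ∧ IsConj β x} *
        Nat.card (GL (Fin (n + 1)) F) =
      Nat.card {x : GL (Fin (n + 1)) F // IsAff x} * (q ^ f - 1) *
        Nat.card {x : GL (Fin (n + 1)) F // IsConj β x} := by
  classical
  subst hq hf
  have hconj := conj_fiber_card β (IsAff (F := F) (n := n))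
  have hall := conj_fiber_card β (fun _ : GL (Fin (n + 1)) F => True)
  have e1 : {g : GL (Fin (n + 1)) F // (fun _ : GL (Fin (n + 1)) F => True) (g * β * g⁻¹)}
      ≃ GL (Fin (n + 1)) F := Equiv.subtypeUnivEquiv (fun _ => trivial)
  have e2 : {x : GL (Fin (n + 1)) F // (fun _ : GL (Fin (n + 1)) F => True) x ∧ IsConj β x}
      ≃ {x : GL (Fin (n + 1)) F // IsConj β x} := Equiv.subtypeEquivRight (fun x => by simp)
  have hG : Nat.card (GL (Fin (n + 1)) F)
      = Nat.card {x : GL (Fin (n + 1)) F // IsConj β x} *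
        Nat.card {c : GL (Fin (n + 1)) F // c * β = β * c} := by
    rw [← Nat.card_congr e1, hall, Nat.card_congr e2]
  have haff := aff_fiber_card β
  have hfix := fix_card β
  rw [hG, show ∀ a b c : ℕ, a * (b * c) = (a * c) * b from fun a b c => by ring, ← hconj,
    haff, hfix]
  ring
end

section
/- Fix real q > 1 and real u with 0 < u < 1. For a ≥ 1 set Q(a) = [∏_{r=1}^∞ (1 − u/q^r)] · u^{a−1} / (q^{a^2−a} (u/q)_a (1/q)_{a−1}), and for a ≥ b ≥ 0 set K(a,b) = u^b (1/q)_a (u/q)_a / (q^{b^2} (1/q)_{a−b} (1/q)_b (u/q)_b). Then for every partition λ of a positive integer, writing λ'_i for the column lengths of λ (with λ'_i = 0 for i > λ_1), one has N_{u,q}(λ) = Q(λ'_1) · ∏_{i=1}^{λ_1} K(λ'_i, λ'_{i+1}). In other words, the Markov chain started from λ'_1 = a with probability Q(a) and with transition probabilities K generates partitions distributed according to N_{u,q}. -/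
/-- `(x/q)_i = ∏_{j=1}^i (1 - x/q^j)`. -/
noncomputable def poch (x q : ℝ) (i : ℕ) : ℝ := ∏ j ∈ Finset.Icc 1 i, (1 - x / q ^ j)

/-- The `i`-th column length `λ'_i` of the partition whose multiset of parts is `m`:
the number of parts of size at least `i` (so `λ'_i = 0` for `i > λ_1`). -/
def col (m : Multiset ℕ) (i : ℕ) : ℕ := (m.filter (fun p => i ≤ p)).card

/-- The measure `N_{u,q}` on partitions (a partition is encoded by its multiset of parts). -/
noncomputable def Nmeas (u q : ℝ) (m : Multiset ℕ) : ℝ :=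
  (∏' r : ℕ, (1 - u / q ^ (r + 1))) * u ^ (m.sum - 1) * (q ^ col m 1 - 1) /
    ∏ i ∈ Finset.Icc 1 m.sum, (q ^ ((col m i) ^ 2) * poch 1 q (m.count i))

/-- The initial distribution
`Q(a) = [∏_{r=1}^∞ (1 - u/q^r)] u^{a-1} / (q^{a²-a} (u/q)_a (1/q)_{a-1})`. -/
noncomputable def Qstart (u q : ℝ) (a : ℕ) : ℝ :=
  (∏' r : ℕ, (1 - u / q ^ (r + 1))) * u ^ (a - 1) /
    (q ^ (a ^ 2 - a) * poch u q a * poch 1 q (a - 1))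

/-- The transition probabilities
`K(a,b) = u^b (1/q)_a (u/q)_a / (q^{b²} (1/q)_{a-b} (1/q)_b (u/q)_b)`. -/
noncomputable def Ktrans (u q : ℝ) (a b : ℕ) : ℝ :=
  u ^ b * poch 1 q a * poch u q a /
    (q ^ (b ^ 2) * poch 1 q (a - b) * poch 1 q b * poch u q b)

lemma poch_zero (x q : ℝ) : poch x q 0 = 1 := by simp [poch]

lemma poch_succ (x q : ℝ) (i : ℕ) : poch x q (i+1) = poch x q i * (1 - x / q ^ (i+1)) := by
  rw [poch, poch, Finset.prod_Icc_succ_top (by omega)]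

lemma poch_pos {x q : ℝ} (hq : 1 < q) (hx1 : x ≤ 1) (i : ℕ) : 0 < poch x q i := by
  apply Finset.prod_pos
  intro j hj
  have hj1 : 1 ≤ j := (Finset.mem_Icc.mp hj).1
  have hqj : 1 < q ^ j := one_lt_pow₀ hq (by omega)
  have : x / q ^ j < 1 := (div_lt_one (by linarith)).mpr (by linarith)
  linarith

lemma col_succ' (m : Multiset ℕ) (i : ℕ) : col m i = col m (i+1) + m.count i := by
  induction m using Multiset.induction with
  | empty => simp [col]
  | cons x s ih =>
    simp only [col, Multiset.filter_cons, Multiset.count_cons, Multiset.card_add] at *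
    split_ifs <;> simp_all <;> omega

lemma col_cons (x : ℕ) (s : Multiset ℕ) (i : ℕ) :
    col (x ::ₘ s) i = col s i + (if i ≤ x then 1 else 0) := by
  simp only [col, Multiset.filter_cons]
  split_ifs <;> simp [add_comm]

lemma sum_col (m : Multiset ℕ) (N : ℕ) (h : ∀ x ∈ m, x ≤ N) :
    ∑ i ∈ Finset.Icc 1 N, col m i = m.sum := by
  induction m using Multiset.induction with
  | empty => simp [col]
  | cons x s ih =>
    have hx : x ≤ N := h x (Multiset.mem_cons_self x s)
    simp only [col_cons, Multiset.sum_cons]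
    rw [Finset.sum_add_distrib, ih (fun y hy => h y (Multiset.mem_cons_of_mem hy)),
      Finset.sum_boole]
    have : Finset.filter (fun i => i ≤ x) (Finset.Icc 1 N) = Finset.Icc 1 x := by
      ext i; simp; omega
    rw [this]
    simp [Nat.card_Icc, add_comm]

lemma tele (f : ℕ → ℝ) (a : ℕ → ℕ) (n : ℕ) :
    (∏ i ∈ Finset.Icc 1 n, f (a i)) * f (a (n+1)) = f (a 1) * ∏ i ∈ Finset.Icc 1 n, f (a (i+1)) := by
  induction n with
  | zero => simp
  | succ k ih =>
    rw [Finset.prod_Icc_succ_top (by omega), Finset.prod_Icc_succ_top (by omega), ih]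
    ring

lemma col_big (m : Multiset ℕ) (i : ℕ) (h : m.sum < i) : col m i = 0 := by
  rw [col, Multiset.card_eq_zero, Multiset.filter_eq_nil]
  intro p hp
  have := Multiset.single_le_sum (fun x _ => Nat.zero_le x) p hp
  omega


/-- The Markov chain with initial distribution `Q` and transition kernel `K` generates
partitions distributed according to `N_{u,q}`:  for every partition `λ` of a positive
integer, `N_{u,q}(λ) = Q(λ'_1) ⬝ ∏_{i≥1} K(λ'_i, λ'_{i+1})`.  (The product below runs over
`1 ≤ i ≤ |λ|`, which includes all `i ≤ λ_1`; the extra factors are `K(0,0) = 1`.) -/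
theorem Nmeas_markov_chain (q u : ℝ) (hq : 1 < q) (hu0 : 0 < u) (hu1 : u < 1)
    (m : Multiset ℕ) (hpos : ∀ x ∈ m, 0 < x) (hne : m ≠ 0) :
    Nmeas u q m =
      Qstart u q (col m 1) *
        ∏ i ∈ Finset.Icc 1 m.sum, Ktrans u q (col m i) (col m (i + 1)) := by
  have hq0 : (0:ℝ) < q := by linarith
  have hu : u ≠ 0 := ne_of_gt hu0
  set n := m.sum with hn
  set C := (∏' r : ℕ, (1 - u / q ^ (r + 1))) with hC
  have hparts : ∀ x ∈ m, x ≤ n := fun x hx =>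
    Multiset.single_le_sum (fun y _ => Nat.zero_le y) x hx
  have hsum : ∑ i ∈ Finset.Icc 1 n, col m i = n := sum_col m n hparts
  have hend : col m (n+1) = 0 := col_big m (n+1) (by omega)
  obtain ⟨x, hx⟩ := Multiset.exists_mem_of_ne_zero hne
  have hxpos := hpos x hx
  have hn1 : 1 ≤ n := le_trans hxpos (hparts x hx)
  have ha1 : 1 ≤ col m 1 := by
    have hmem : x ∈ m.filter (fun p => 1 ≤ p) := Multiset.mem_filter.mpr ⟨hx, hxpos⟩
    have : 0 < col m 1 := Multiset.card_pos_iff_exists_mem.mpr ⟨x, hmem⟩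
    omega
  set a1 := col m 1 with ha1def
  have hle : a1 ≤ n := by
    have h := Finset.single_le_sum (f := fun i => col m i)
      (fun i _ => Nat.zero_le _) (Finset.mem_Icc.mpr ⟨le_refl 1, hn1⟩)
    omega
  -- rewrite each Ktrans factor replacing (col m i - col m (i+1)) by m.count i
  have hK : ∀ i ∈ Finset.Icc 1 n, Ktrans u q (col m i) (col m (i+1)) =
      u ^ (col m (i+1)) * poch 1 q (col m i) * poch u q (col m i) /
        (q ^ ((col m (i+1)) ^ 2) * poch 1 q (m.count i) * poch 1 q (col m (i+1)) *
          poch u q (col m (i+1))) := by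
    intro i _
    have hc : col m i - col m (i+1) = m.count i := by
      have := col_succ' m i; omega
    rw [Ktrans, hc]
  rw [Finset.prod_congr rfl hK]
  simp only [Finset.prod_div_distrib, Finset.prod_mul_distrib]
  set U2 := ∏ i ∈ Finset.Icc 1 n, u ^ col m (i+1) with hU2
  set A1 := ∏ i ∈ Finset.Icc 1 n, poch 1 q (col m i) with hA1
  set B1 := ∏ i ∈ Finset.Icc 1 n, poch u q (col m i) with hB1
  set A2 := ∏ i ∈ Finset.Icc 1 n, poch 1 q (col m (i+1)) with hA2
  set B2 := ∏ i ∈ Finset.Icc 1 n, poch u q (col m (i+1)) with hB2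
  set Qd := ∏ i ∈ Finset.Icc 1 n, q ^ ((col m (i+1)) ^ 2) with hQd
  set Qall := ∏ i ∈ Finset.Icc 1 n, q ^ ((col m i) ^ 2) with hQall
  set Cc := ∏ i ∈ Finset.Icc 1 n, poch 1 q (m.count i) with hCc
  -- telescoping relations
  have tA : A1 = poch 1 q a1 * A2 := by
    have := tele (fun k => poch 1 q k) (col m) n
    rw [hend, poch_zero, mul_one] at this; exact this
  have tB : B1 = poch u q a1 * B2 := by
    have := tele (fun k => poch u q k) (col m) n
    rw [hend, poch_zero, mul_one] at this; exact this
  have tQ : Qall = q ^ (a1 ^ 2) * Qd := by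
    have := tele (fun k => q ^ (k ^ 2)) (col m) n
    simpa [hend] using this
  have tU : u ^ n = u ^ a1 * U2 := by
    have := tele (fun k => u ^ k) (col m) n
    rw [hend, pow_zero, mul_one, Finset.prod_pow_eq_pow_sum, hsum] at this
    exact this
  -- positivity / nonvanishing
  have pP1 : ∀ i, (0:ℝ) < poch 1 q i := fun i => poch_pos hq le_rfl i
  have pPu : ∀ i, (0:ℝ) < poch u q i := fun i => poch_pos hq (by linarith) i
  have pA2 : 0 < A2 := Finset.prod_pos fun i _ => pP1 _
  have pB2 : 0 < B2 := Finset.prod_pos fun i _ => pPu _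
  have pCc : 0 < Cc := Finset.prod_pos fun i _ => pP1 _
  have pQd : 0 < Qd := Finset.prod_pos fun i _ => pow_pos hq0 _
  have pQall : 0 < Qall := Finset.prod_pos fun i _ => pow_pos hq0 _
  have pU2 : 0 < U2 := Finset.prod_pos fun i _ => pow_pos hu0 _
  -- scalar relations
  have hQA : (q:ℝ) ^ (a1 ^ 2) = q ^ (a1 ^ 2 - a1) * q ^ a1 := by
    rw [← pow_add]
    congr 1
    have : a1 ≤ a1 ^ 2 := Nat.le_self_pow two_ne_zero a1
    omega
  have hP : poch 1 q a1 = poch 1 q (a1 - 1) * (1 - 1 / q ^ a1) := by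
    have h1 : a1 - 1 + 1 = a1 := by omega
    rw [← h1, poch_succ, h1]
  have hu' : u ^ (a1 - 1) * U2 = u ^ (n - 1) := by
    have e1 : u ^ n = u ^ (n-1) * u := by rw [← pow_succ]; congr 1; omega
    have e2 : u ^ a1 = u ^ (a1-1) * u := by rw [← pow_succ]; congr 1; omega
    rw [e1, e2] at tU
    have : (u ^ (n-1)) * u = (u ^ (a1-1) * U2) * u := by rw [tU]; ring
    exact (mul_right_cancel₀ hu this).symm
  rw [Nmeas, Qstart, ← hn, ← ha1def, ← hC, Finset.prod_mul_distrib, ← hQall, ← hCc,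
    tA, tB, tQ, hQA, hP, ← hu']
  have hqa : (q:ℝ) ^ a1 ≠ 0 := by positivity
  have hqa2 : (q:ℝ) ^ (a1 ^ 2 - a1) ≠ 0 := by positivity
  have nA2 : A2 ≠ 0 := pA2.ne'
  have nB2 : B2 ≠ 0 := pB2.ne'
  have nCc : Cc ≠ 0 := pCc.ne'
  have nQd : Qd ≠ 0 := pQd.ne'
  have nP1 : poch 1 q (a1 - 1) ≠ 0 := (pP1 _).ne'
  have nPu : poch u q a1 ≠ 0 := (pPu _).ne'
  field_simp
end
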